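/- There exists a function h, holomorphic on the half-plane {s ∈ ℂ : Re s > −1/2}, such that h(s) = Γ(s + 1/2)/(4s√π) − Γ(s)/4 for every s in that half-plane with s ≠ 0, and h(0) = −(ln 2)/2. -/

import Mathlib

open Complex

/-- There exists a function `h`, holomorphic on the half-plane `{s : Re s > −1/2}`, such that
`h(s) = Γ(s + 1/2)/(4s√π) − Γ(s)/4` for every `s ≠ 0` in that half-plane, and
`h(0) = −(ln 2)/2`. -/
theorem stmt1 :
    ∃ h : ℂ → ℂ, DifferentiableOn ℂ h {s : ℂ | -1/2 < s.re} ∧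
      (∀ s : ℂ, -1/2 < s.re → s ≠ 0 →
        h s = Complex.Gamma (s + 1/2) / (4 * s * (Real.sqrt Real.pi : ℂ))
              - Complex.Gamma s / 4) ∧
      h 0 = -(Real.log 2) / 2 := by
  set U : Set ℂ := {s : ℂ | -1/2 < s.re} with hU
  have hUopen : IsOpen U := isOpen_lt continuous_const Complex.continuous_re
  have h0U : (0 : ℂ) ∈ U := by simp [hU]; norm_num
  set g : ℂ → ℂ := fun s => (2:ℂ) ^ (-2*s) * Complex.Gamma (2*s+1) / Complex.Gamma (s+1)
      - Complex.Gamma (s+1) with hg_def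
  -- basic nonvanishing
  have hGne : ∀ s : ℂ, s ∈ U → Complex.Gamma (s+1) ≠ 0 := by
    intro s hs
    apply Complex.Gamma_ne_zero_of_re_pos
    simp only [add_re, one_re]
    have : -1/2 < s.re := hs
    linarith
  -- differentiability of g on U
  have hgdiff : ∀ s : ℂ, s ∈ U → DifferentiableAt ℂ g s := by
    intro s hs
    have hsre : -1/2 < s.re := hs
    have d1 : DifferentiableAt ℂ (fun s : ℂ => (2:ℂ) ^ (-2*s)) s := by
      have := (hasStrictDerivAt_const_cpow (x := (2:ℂ)) (y := -2*s)
        (Or.inl two_ne_zero)).hasDerivAt.comp s (((hasDerivAt_id s).const_mul (-2)))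
      exact this.differentiableAt
    have d2 : DifferentiableAt ℂ (fun s : ℂ => Complex.Gamma (2*s+1)) s := by
      have hΓ : DifferentiableAt ℂ Complex.Gamma (2*s+1) := by
        apply Complex.differentiableAt_Gamma
        intro m h
        have : (2*s+1).re = -(m:ℝ) := by rw [h]; simp
        simp only [add_re, one_re, mul_re, re_ofNat, im_ofNat, zero_mul, sub_zero] at this
        have : (0:ℝ) ≤ m := Nat.cast_nonneg m
        linarith [this]
      exact hΓ.comp s (((differentiableAt_fun_id).const_mul (2:ℂ)).add_const 1)
    have d3 : DifferentiableAt ℂ (fun s : ℂ => Complex.Gamma (s+1)) s := by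
      have hΓ : DifferentiableAt ℂ Complex.Gamma (s+1) := by
        apply Complex.differentiableAt_Gamma
        intro m h
        have : (s+1).re = -(m:ℝ) := by rw [h]; simp
        simp only [add_re, one_re] at this
        have : (0:ℝ) ≤ m := Nat.cast_nonneg m
        linarith [this]
      exact hΓ.comp s ((differentiableAt_fun_id).add_const 1)
    exact ((d1.mul d2).div d3 (hGne s hs)).sub d3
  have hg0 : g 0 = 0 := by
    simp [hg_def, Complex.Gamma_one]
  -- derivative of g at 0
  have hΓ1 : DifferentiableAt ℂ Complex.Gamma 1 := by
    apply Complex.differentiableAt_Gamma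
    intro m h
    have : (1:ℝ) = -(m:ℝ) := by exact_mod_cast congrArg Complex.re h
    have : (0:ℝ) ≤ m := Nat.cast_nonneg m
    linarith
  set c : ℂ := deriv Complex.Gamma 1 with hc
  have hΓd : HasDerivAt Complex.Gamma c 1 := hΓ1.hasDerivAt
  have A : HasDerivAt (fun s : ℂ => (2:ℂ) ^ (-2*s)) (-2 * Complex.log 2) 0 := by
    have h1 : HasDerivAt (fun y : ℂ => (2:ℂ) ^ y) ((2:ℂ) ^ ((fun s : ℂ => -2*s) 0) * Complex.log 2)
        ((fun s : ℂ => -2*s) 0) :=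
      (hasStrictDerivAt_const_cpow (Or.inl two_ne_zero)).hasDerivAt
    have h2 : HasDerivAt (fun s : ℂ => -2*s) (-2) 0 := by
      simpa using (hasDerivAt_id (0:ℂ)).const_mul (-2 : ℂ)
    have h3 : HasDerivAt (fun s : ℂ => (2:ℂ) ^ (-2*s))
        (((2:ℂ) ^ (-2*(0:ℂ)) * Complex.log 2) * (-2)) 0 := h1.comp 0 h2
    convert h3 using 1
    rw [show -2*(0:ℂ) = 0 by ring, Complex.cpow_zero]
    ring
  have B : HasDerivAt (fun s : ℂ => Complex.Gamma (2*s+1)) (2 * c) 0 := by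
    have h2 : HasDerivAt (fun s : ℂ => 2*s+1) 2 0 := by
      simpa using ((hasDerivAt_id (0:ℂ)).const_mul (2 : ℂ)).add_const 1
    have hΓd' : HasDerivAt Complex.Gamma c ((fun s : ℂ => 2*s+1) 0) := by simpa using hΓd
    have := hΓd'.comp 0 h2
    simpa [mul_comm, Function.comp_def] using this
  have C : HasDerivAt (fun s : ℂ => Complex.Gamma (s+1)) c 0 := by
    have h2 : HasDerivAt (fun s : ℂ => s+1) 1 0 := by
      simpa using (hasDerivAt_id (0:ℂ)).add_const 1
    have hΓd' : HasDerivAt Complex.Gamma c ((fun s : ℂ => s+1) 0) := by simpa using hΓd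
    simpa [Function.comp_def] using hΓd'.comp 0 h2
  have hgderiv : HasDerivAt g (-2 * Complex.log 2) 0 := by
    have := ((A.mul B).div C (by simp [Complex.Gamma_one])).sub C
    convert this using 1
    rfl
    rfl
    rfl
    simp [Complex.Gamma_one]
    ring
  refine ⟨fun s => dslope g 0 s / 4, ?_, ?_, ?_⟩
  · have : DifferentiableOn ℂ (dslope g 0) U := by
      rw [differentiableOn_dslope (hUopen.mem_nhds h0U)]
      exact fun s hs => (hgdiff s hs).differentiableWithinAt
    exact this.div_const 4
  · intro s hsU hs0
    show dslope g 0 s / 4 = _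
    have hds : dslope g 0 s = g s / s := by
      rw [dslope_of_ne _ hs0, slope_def_field, hg0]
      simp [div_eq_mul_inv]
    rw [hds]
    have h2s : (2:ℂ) * s ≠ 0 := mul_ne_zero two_ne_zero hs0
    have hGs : Complex.Gamma s ≠ 0 := by
      apply Complex.Gamma_ne_zero
      intro m
      rcases Nat.eq_zero_or_pos m with rfl | hm
      · simpa using hs0
      · intro h
        have h1 : s.re = -(m:ℝ) := by rw [h]; simp
        have h2 : (1:ℝ) ≤ m := by exact_mod_cast hm
        have hsre : -1/2 < s.re := hsU
        rw [h1] at hsre; linarith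
    have hsqrt : ((Real.sqrt Real.pi : ℝ) : ℂ) ≠ 0 := by
      rw [Complex.ofReal_ne_zero]
      exact Real.sqrt_ne_zero'.mpr Real.pi_pos
    have hpow : (2:ℂ) ^ ((1:ℂ)-2*s) = 2 * (2:ℂ) ^ (-2*s) := by
      rw [show (1:ℂ)-2*s = 1 + (-2*s) by ring, Complex.cpow_add _ _ two_ne_zero,
        Complex.cpow_one]
    have hdup := Complex.Gamma_mul_Gamma_add_half s
    rw [hpow] at hdup
    have hG1 : Complex.Gamma (s+1) = s * Complex.Gamma s := Complex.Gamma_add_one s hs0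
    have hG2 : Complex.Gamma (2*s+1) = 2*s * Complex.Gamma (2*s) := Complex.Gamma_add_one _ h2s
    have hpne : (2:ℂ) ^ (-2*s) ≠ 0 := by
      rw [Complex.cpow_def_of_ne_zero two_ne_zero]; exact Complex.exp_ne_zero _
    simp only [hg_def]
    rw [hG1, hG2]
    set P := (2:ℂ)^(-2*s) with hP
    set G2 := Complex.Gamma (2*s) with hG2d
    set Gs := Complex.Gamma s with hGsd
    set Gh := Complex.Gamma (s+1/2) with hGhd
    set R := ((Real.sqrt Real.pi : ℝ) : ℂ) with hR
    field_simp
    linear_combination (-1 : ℂ) * hdup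
  · show dslope g 0 0 / 4 = _
    have hd0 : dslope g 0 0 = -2 * Complex.log 2 := by
      rw [dslope_same]; exact hgderiv.deriv
    rw [hd0]
    rw [show ((2:ℂ)) = ((2:ℝ):ℂ) by norm_cast, ← Complex.ofReal_log (by norm_num : (0:ℝ) ≤ 2)]
    push_cast
    ring
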